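/- arXiv:2508.01745 — 2 statements merged into one kernel-verified Lean document; each statement's English description precedes it below -/
import Mathlib

section
/- Let τ₁,…,τ_U > 0 with ∑_u τ_u = 1, and define the global gradient ∇F(w) = ∑_u τ_u ∇F_u(w). Suppose E[‖∇F_u(w) − ∇F(w)‖²] ≤ Z_u² for each u, and let β̄₁,…,β̄_U ≥ 0 with ∑_u β̄_u = 1. Then E[‖∇F(w) − ∑_u β̄_u ∇F_u(w)‖²] ≤ χ² · ∑_u τ_u Z_u², where χ² = ∑_u (β̄_u − τ_u)²/τ_u. -/
open MeasureTheory

lemma cs_pointwise {E : Type*} [NormedAddCommGroup E] [InnerProductSpace ℝ E]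
    (U : ℕ) (c τ : Fin U → ℝ) (hτpos : ∀ u, 0 < τ u) (v : Fin U → E) :
    ‖∑ u, c u • v u‖ ^ 2 ≤ (∑ u, (c u) ^ 2 / τ u) * (∑ u, τ u * ‖v u‖ ^ 2) := by
  have h1 : ‖∑ u, c u • v u‖ ≤ ∑ u, |c u| * ‖v u‖ := by
    refine (norm_sum_le _ _).trans_eq ?_
    simp [norm_smul]
  have h2 : (∑ u, |c u| * ‖v u‖) ^ 2 ≤ (∑ u, (c u) ^ 2 / τ u) * (∑ u, τ u * ‖v u‖ ^ 2) := by
    refine Finset.sum_sq_le_sum_mul_sum_of_sq_eq_mul _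
      (fun u _ => div_nonneg (sq_nonneg _) (hτpos u).le)
      (fun u _ => mul_nonneg (hτpos u).le (sq_nonneg _))
      (fun u _ => ?_)
    rw [mul_pow, sq_abs, div_mul_eq_mul_div, mul_comm (τ u), ← mul_assoc,
      mul_div_assoc, div_self (hτpos u).ne', mul_one]
  calc ‖∑ u, c u • v u‖ ^ 2 ≤ (∑ u, |c u| * ‖v u‖) ^ 2 := by
        apply pow_le_pow_left₀ (norm_nonneg _) h1
    _ ≤ _ := h2

/-- Heterogeneity bound for biased aggregation weights: with global gradient
`∇F = ∑_u τ_u ∇F_u`, heterogeneity bounds `E[‖∇F_u - ∇F‖²] ≤ Z_u²`, and weights `β̄_u`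
summing to one, `E[‖∇F - ∑_u β̄_u ∇F_u‖²] ≤ χ² ∑_u τ_u Z_u²` where
`χ² = ∑_u (β̄_u - τ_u)²/τ_u`. -/
theorem chi_square_heterogeneity_bound
    {Ω : Type*} [MeasurableSpace Ω] (μ : Measure Ω) [IsProbabilityMeasure μ]
    {E : Type*} [NormedAddCommGroup E] [InnerProductSpace ℝ E]
    (U : ℕ) (τ β Z : Fin U → ℝ)
    (hτpos : ∀ u, 0 < τ u) (hτsum : ∑ u, τ u = 1)
    (hβnonneg : ∀ u, 0 ≤ β u) (hβsum : ∑ u, β u = 1)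
    (G : Fin U → Ω → E)  -- G u ω = ∇F_u evaluated at the (possibly random) point w
    (Gbar : Ω → E) (hGbar : ∀ ω, Gbar ω = ∑ u, τ u • G u ω)
    (hIntu : ∀ u, Integrable (fun ω => ‖G u ω - Gbar ω‖ ^ 2) μ)
    (hZ : ∀ u, ∫ ω, ‖G u ω - Gbar ω‖ ^ 2 ∂μ ≤ (Z u) ^ 2)
    (hInt : Integrable (fun ω => ‖Gbar ω - ∑ u, β u • G u ω‖ ^ 2) μ) :
    ∫ ω, ‖Gbar ω - ∑ u, β u • G u ω‖ ^ 2 ∂μ ≤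
      (∑ u, (β u - τ u) ^ 2 / τ u) * ∑ u, τ u * (Z u) ^ 2 := by
  set χ : ℝ := ∑ u, (β u - τ u) ^ 2 / τ u with hχ
  have hχnn : 0 ≤ χ :=
    Finset.sum_nonneg fun u _ => div_nonneg (sq_nonneg _) (hτpos u).le
  -- rewrite the difference
  have hrw : ∀ ω, Gbar ω - ∑ u, β u • G u ω = ∑ u, (τ u - β u) • (G u ω - Gbar ω) := by
    intro ω
    have : ∑ u, (τ u - β u) • (G u ω - Gbar ω)
        = (∑ u, τ u • G u ω) - (∑ u, β u • G u ω)
          - ((∑ u, τ u) - (∑ u, β u)) • Gbar ω := by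
      simp only [sub_smul, smul_sub, Finset.sum_sub_distrib, Finset.sum_smul]
    rw [this, hβsum, hτsum, ← hGbar ω]
    simp only [sub_self, zero_smul, sub_zero]
  -- pointwise bound
  have hpt : ∀ ω, ‖Gbar ω - ∑ u, β u • G u ω‖ ^ 2
      ≤ χ * ∑ u, τ u * ‖G u ω - Gbar ω‖ ^ 2 := by
    intro ω
    rw [hrw ω]
    have h := cs_pointwise U (fun u => τ u - β u) τ hτpos (fun u => G u ω - Gbar ω)
    have he : ∀ u : Fin U, (τ u - β u) ^ 2 / τ u = (β u - τ u) ^ 2 / τ u := by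
      intro u; ring_nf
    simpa [he] using h
  have hIntRHS : Integrable (fun ω => χ * ∑ u, τ u * ‖G u ω - Gbar ω‖ ^ 2) μ := by
    apply Integrable.const_mul
    apply integrable_finset_sum
    intro u _
    exact (hIntu u).const_mul _
  calc ∫ ω, ‖Gbar ω - ∑ u, β u • G u ω‖ ^ 2 ∂μ
      ≤ ∫ ω, χ * ∑ u, τ u * ‖G u ω - Gbar ω‖ ^ 2 ∂μ :=
        integral_mono hInt hIntRHS hpt
    _ = χ * ∑ u, τ u * ∫ ω, ‖G u ω - Gbar ω‖ ^ 2 ∂μ := by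
        rw [integral_const_mul, integral_finset_sum _ (fun u _ => (hIntu u).const_mul _)]
        simp_rw [integral_const_mul]
    _ ≤ χ * ∑ u, τ u * (Z u) ^ 2 := by
        apply mul_le_mul_of_nonneg_left _ hχnn
        apply Finset.sum_le_sum
        intro u _
        exact mul_le_mul_of_nonneg_left (hZ u) (hτpos u).le
end

section
/- Let g₁,…,g_U be independent Bernoulli trials where trial u succeeds with probability 1 − q ∈ (0,1], and let S devices be sampled i.i.d. with replacement from distribution (τ_u). Conditional on at least one of the S sampled devices succeeding, the expected value of the average of the gradients over succeeding sampled devices equals ∑_u τ_u g_u, i.e., the aggregation rule is an unbiased estimator of the weighted gradient when all devices have the same transmission error probability q. -/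
open Finset

lemma aux_sumA {U S V : ℕ} (τ : Fin U → ℝ) (hτsum : ∑ u, τ u = 1)
    (g : Fin U → EuclideanSpace ℝ (Fin V)) (i₀ : Fin S) :
    ∑ s : Fin S → Fin U, (∏ i, τ (s i)) • g (s i₀) = ∑ u, τ u • g u := by
  rw [← Equiv.sum_comp (Equiv.funSplitAt i₀ (Fin U)).symm
    (fun s => (∏ i, τ (s i)) • g (s i₀))]
  have he : ∀ (p : Fin U × ({ j // j ≠ i₀ } → Fin U)) (i : Fin S),
      (Equiv.funSplitAt i₀ (Fin U)).symm p i
        = if h : i = i₀ then p.1 else p.2 ⟨i, h⟩ := by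
    intro p i
    simp [Equiv.funSplitAt, Equiv.piSplitAt]
  rw [Fintype.sum_prod_type]
  have key : ∀ u : Fin U, ∀ t : { j // j ≠ i₀ } → Fin U,
      (∏ i, τ ((Equiv.funSplitAt i₀ (Fin U)).symm (u, t) i))
        = τ u * ∏ j : { j // j ≠ i₀ }, τ (t j) := by
    intro u t
    rw [Fintype.prod_eq_mul_prod_compl i₀]
    congr 1
    · rw [he]; simp
    · refine ((Finset.prod_subtype (p := fun j => j ≠ i₀) ({i₀}ᶜ : Finset (Fin S))
        (by simp) (fun i => τ ((Equiv.funSplitAt i₀ (Fin U)).symm (u, t) i)))).trans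
        (Finset.prod_congr rfl fun j _ => ?_)
      rw [he]
      simp [j.2]
  simp_rw [key]
  have hw : ∑ t : { j // j ≠ i₀ } → Fin U, ∏ j, τ (t j) = 1 := by
    rw [← Fintype.prod_sum fun (_ : { j // j ≠ i₀ }) u => τ u]
    simp [hτsum]
  refine Finset.sum_congr rfl fun u _ => ?_
  have hg : ∀ t : { j // j ≠ i₀ } → Fin U,
      g ((Equiv.funSplitAt i₀ (Fin U)).symm (u, t) i₀) = g u := by
    intro t; rw [he]; simp
  simp_rw [hg]
  rw [← Finset.sum_smul, ← Finset.mul_sum, hw, mul_one]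



/-- Unbiasedness of the FL aggregation under uniform transmission error probability `q`:
`S` devices are sampled i.i.d. with replacement according to `(τ_u)`, and each sampled
device independently succeeds with probability `1 - q`.  Conditional on at least one
success, the expected average of the gradients over the succeeding sampled devices equals
the weighted gradient `∑_u τ_u g_u`.  The finite sample space is
`(Fin S → Fin U) × (Fin S → Bool)` (sampled indices and success indicators), with
probability mass `P(s, a) = (∏ i τ_{s i}) (∏ i (1-q if a i else q))`; the conditioning
event has probability `1 - q^S`. -/
theorem aggregation_unbiased_uniform_error
    (U S V : ℕ) (hS : 0 < S)
    (τ : Fin U → ℝ) (hτpos : ∀ u, 0 < τ u) (hτsum : ∑ u, τ u = 1)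
    (q : ℝ) (hq0 : 0 ≤ q) (hq1 : q < 1)
    (g : Fin U → EuclideanSpace ℝ (Fin V))
    (P : (Fin S → Fin U) × (Fin S → Bool) → ℝ)
    (hP : ∀ ω, P ω = (∏ i, τ (ω.1 i)) * ∏ i, (if ω.2 i then 1 - q else q)) :
    ∑ ω ∈ Finset.univ.filter (fun ω : (Fin S → Fin U) × (Fin S → Bool) =>
        ∃ i, ω.2 i = true),
      (P ω / (1 - q ^ S)) •
        (((Finset.univ.filter (fun i : Fin S => ω.2 i = true)).card : ℝ)⁻¹ •
          ∑ i ∈ Finset.univ.filter (fun i : Fin S => ω.2 i = true), g (ω.1 i))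
      = ∑ u, τ u • g u := by
  have hc : (1 : ℝ) - q ^ S ≠ 0 := by
    have : q ^ S < 1 := pow_lt_one₀ hq0 hq1 hS.ne'
    linarith
  rw [Finset.sum_filter, Fintype.sum_prod_type_right]
  have hmain : ∀ b : Fin S → Bool,
      (∑ s : Fin S → Fin U, if (∃ i, b i = true) then
        (P (s, b) / (1 - q ^ S)) •
          (((Finset.univ.filter (fun i : Fin S => b i = true)).card : ℝ)⁻¹ •
            ∑ i ∈ Finset.univ.filter (fun i : Fin S => b i = true), g (s i)) else 0)
      = (if (∃ i, b i = true) then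
          ((∏ i, (if b i then 1 - q else q)) / (1 - q ^ S)) else 0) • (∑ u, τ u • g u) := by
    intro b
    by_cases hb : ∃ i, b i = true
    · simp only [hb, if_true]
      set A := Finset.univ.filter (fun i : Fin S => b i = true) with hA
      have hAne : A.Nonempty := by
        obtain ⟨i, hi⟩ := hb; exact ⟨i, by simp [hA, hi]⟩
      have hcard : (A.card : ℝ) ≠ 0 := by
        exact_mod_cast hAne.card_pos.ne'
      have step : ∀ s : Fin S → Fin U,
          (P (s, b) / (1 - q ^ S)) • ((A.card : ℝ)⁻¹ • ∑ i ∈ A, g (s i))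
          = ((∏ i, (if b i then 1 - q else q)) / (1 - q ^ S)) •
              ((A.card : ℝ)⁻¹ • ((∏ i, τ (s i)) • ∑ i ∈ A, g (s i))) := by
        intro s
        rw [hP]
        dsimp only
        simp only [smul_smul]
        congr 1
        ring
      simp_rw [step]
      rw [← Finset.smul_sum]
      congr 1
      rw [← Finset.smul_sum]
      have hsum : ∑ s : Fin S → Fin U, (∏ i, τ (s i)) • ∑ i ∈ A, g (s i)
          = (A.card : ℝ) • ∑ u, τ u • g u := by
        calc ∑ s : Fin S → Fin U, (∏ i, τ (s i)) • ∑ i ∈ A, g (s i)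
            = ∑ s : Fin S → Fin U, ∑ i ∈ A, (∏ j, τ (s j)) • g (s i) := by
              simp [Finset.smul_sum]
          _ = ∑ i ∈ A, ∑ s : Fin S → Fin U, (∏ j, τ (s j)) • g (s i) := Finset.sum_comm
          _ = ∑ _i ∈ A, ∑ u, τ u • g u :=
              Finset.sum_congr rfl fun i _ => aux_sumA τ hτsum g i
          _ = (A.card : ℝ) • ∑ u, τ u • g u := by
              rw [Finset.sum_const, Nat.cast_smul_eq_nsmul]
      rw [hsum, smul_smul, inv_mul_cancel₀ hcard, one_smul]
    · simp [hb]
  rw [Finset.sum_congr rfl fun b _ => hmain b, ← Finset.sum_smul]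
  have h1 : ∑ b : Fin S → Bool, ∏ i, (if b i then 1 - q else q) = 1 := by
    rw [← Fintype.prod_sum fun (_ : Fin S) (c : Bool) => if c then 1 - q else q]
    simp
  have h2 : ∑ b : Fin S → Bool,
      (if (∃ i, b i = true) then (∏ i, (if b i then 1 - q else q)) else 0)
      = 1 - q ^ S := by
    have hstep : ∀ b : Fin S → Bool,
        (if (∃ i, b i = true) then (∏ i, (if b i then 1 - q else q)) else 0)
        = (∏ i, (if b i then 1 - q else q))
          - (if b = (fun _ => false) then (∏ i, (if b i then 1 - q else q)) else 0) := by
      intro b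
      by_cases hb : b = fun _ => false
      · subst hb; simp
      · have hex : ∃ i, b i = true := by
          by_contra h
          push_neg at h
          exact hb (funext fun i => by simpa using h i)
        simp [hex, hb]
    rw [Finset.sum_congr rfl fun b _ => hstep b, Finset.sum_sub_distrib, h1,
      Finset.sum_ite_eq' Finset.univ (fun _ => false)
        (fun b => ∏ i, (if b i then 1 - q else q))]
    simp
  calc (∑ b : Fin S → Bool, if (∃ i, b i = true) then
          (∏ i, (if b i then 1 - q else q)) / (1 - q ^ S) else 0) • (∑ u, τ u • g u)
      = ((∑ b : Fin S → Bool, if (∃ i, b i = true) then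
          (∏ i, (if b i then 1 - q else q)) else 0) / (1 - q ^ S)) • (∑ u, τ u • g u) := by
        rw [Finset.sum_div]
        congr 1
        exact Finset.sum_congr rfl fun b _ => by split_ifs <;> simp
    _ = ∑ u, τ u • g u := by
        rw [h2, div_self hc, one_smul]
end
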